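/- arXiv:1007.0861 — 3 statements merged into one kernel-verified Lean document; each statement's English description precedes it below -/
import Mathlib

section
/- For any 1 ≤ i ≤ N−1, with w treated as a constant parameter, the operator T_i(1) = T_i + t^{-1} satisfies, as an identity of rational functions in w, z_i, z_{i+1}: T_i(1)[ (t z_i − t^{-1} z_{i+1}) / ((w − z_i)(t w − t^{-1} z_{i+1})) ] = (t z_i − t^{-1} z_{i+1}) · ( 1/((w − z_i)(w − z_{i+1})) + 1/((t w − t^{-1} z_i)(t w − t^{-1} z_{i+1})) ). -/
open MvPolynomial Finset

noncomputable section

/-- Variable set: `m+1` parameters (index `0` is the indeterminate `t`, the others are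
extra invertible indeterminates such as `t^{u_k}`), `N` variables `z_0, …, z_{N-1}`,
and `r` auxiliary variables `w_0, …, w_{r-1}`. -/
abbrev Var (m N r : ℕ) : Type := (Fin (m + 1) ⊕ Fin N) ⊕ Fin r

/-- The polynomial ring over `ℚ` on those variables. -/
abbrev PR (m N r : ℕ) : Type := MvPolynomial (Var m N r) ℚ

/-- The field of rational functions over `ℚ` in the parameters, the `z`'s and the `w`'s. -/
abbrev FF (m N r : ℕ) : Type := FractionRing (PR m N r)

variable (m N r : ℕ)

/-- The parameter with index `k` (so `pa m N r 0` is `t`). -/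
def pa (k : Fin (m + 1)) : FF m N r :=
  algebraMap (PR m N r) (FF m N r) (X (Sum.inl (Sum.inl k)))

/-- The indeterminate `t`. -/
def tt' : FF m N r := pa m N r 0

/-- The variable `z_k` (`0`-indexed; junk value `0` if `k ≥ N`). -/
def zn (k : ℕ) : FF m N r :=
  if h : k < N then algebraMap (PR m N r) (FF m N r) (X (Sum.inl (Sum.inr ⟨k, h⟩))) else 0

/-- The variable `w_k` (`0`-indexed; junk value `0` if `k ≥ r`). -/
def wv (k : ℕ) : FF m N r :=
  if h : k < r then algebraMap (PR m N r) (FF m N r) (X (Sum.inr ⟨k, h⟩)) else 0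

/-- The field automorphism `s_i` exchanging `z_i` and `z_{i+1}` (identity if `i + 1 ≥ N`). -/
def sw (i : ℕ) : FF m N r ≃+* FF m N r :=
  if h : i + 1 < N then
    IsFractionRing.ringEquivOfRingEquiv
      ((renameEquiv ℚ (Equiv.swap ((Sum.inl (Sum.inr (⟨i, Nat.lt_of_succ_lt h⟩ : Fin N))) : Var m N r)
          (Sum.inl (Sum.inr (⟨i + 1, h⟩ : Fin N))))).toRingEquiv)
  else RingEquiv.refl _

/-- The Hecke algebra generator `T_i` in the polynomial representation (`0`-indexed:
`T_i f = ((t z_i - t⁻¹ z_{i+1})/(z_i - z_{i+1})) (f - s_i f) - t⁻¹ f`). -/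
def TT (i : ℕ) (f : FF m N r) : FF m N r :=
  (tt' m N r * zn m N r i - (tt' m N r)⁻¹ * zn m N r (i + 1)) / (zn m N r i - zn m N r (i + 1)) *
      (f - sw m N r i f) - (tt' m N r)⁻¹ * f

/-- The `t`-number `[u] = (t^u - t^{-u})/(t - t⁻¹)`, where `a` stands for `t^u`. -/
def tnum (a : FF m N r) : FF m N r := (a - a⁻¹) / (tt' m N r - (tt' m N r)⁻¹)

/-- The Baxterised operator `T_i(u) = T_i + (t^{-u}/[u]) id`, where `a` stands for `t^u`. -/
def TB (i : ℕ) (a : FF m N r) (f : FF m N r) : FF m N r :=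
  TT m N r i f + a⁻¹ / tnum m N r a * f

/-- The `t`-Vandermonde `Δ_t(z_a, …, z_{b-1}) = ∏_{a ≤ i < j < b} (t z_i - t⁻¹ z_j)`. -/
def Delt (a b : ℕ) : FF m N r :=
  ∏ j ∈ Finset.Ico a b, ∏ i ∈ Finset.Ico a j,
    (tt' m N r * zn m N r i - (tt' m N r)⁻¹ * zn m N r j)

/-- The Bethe wave function `φ_i(w) = ∏_{k<i} (w - z_k)⁻¹ ∏_{i ≤ k < N} (t w - t⁻¹ z_k)⁻¹`. -/
def phiF (i : ℕ) (w : FF m N r) : FF m N r :=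
  (∏ k ∈ Finset.range i, (w - zn m N r k))⁻¹ *
    (∏ k ∈ Finset.Ico i N, (tt' m N r * w - (tt' m N r)⁻¹ * zn m N r k))⁻¹

/-- Substitution `w_k := a`, computed on the reduced numerator and denominator. -/
def subW (k : ℕ) (a : FF m N r) (F : FF m N r) : FF m N r :=
  if h : k < r then
    aeval (fun v : Var m N r =>
        if v = Sum.inr (⟨k, h⟩ : Fin r) then a else algebraMap (PR m N r) (FF m N r) (X v))
      (IsFractionRing.num (PR m N r) F) /
    aeval (fun v : Var m N r =>
        if v = Sum.inr (⟨k, h⟩ : Fin r) then a else algebraMap (PR m N r) (FF m N r) (X v))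
      ((IsFractionRing.den (PR m N r) F) : PR m N r)
  else F

/-- The residue in `w_k` at `a` of a function with at most a simple pole there:
`((w_k - a) F)|_{w_k = a}`. -/
def resW (k : ℕ) (a : FF m N r) (F : FF m N r) : FF m N r :=
  subW m N r k a ((wv m N r k - a) * F)

/-- The contour integral `∮ F dw_k/(2πi)`: the sum of the residues at `z_0, …, z_{N-1}`. -/
def cint (k : ℕ) (F : FF m N r) : FF m N r :=
  ∑ j ∈ Finset.range N, resW m N r k (zn m N r j) F

/-- The iterated contour integral `∮⋯∮ F dw_0 ⋯ dw_{r-1}`,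
evaluated one variable at a time (`w_0` first). -/
def iInt (F : FF m N r) : FF m N r :=
  (List.range r).foldl (fun G k => cint m N r k G) F

/-- The string of Baxterised operators
`rowOps e c tv = T_{e+c-1}(v+1) ∘ T_{e+c-2}(v+2) ∘ ⋯ ∘ T_e(v+c)` (with `tv = t^v`). -/
def rowOps (e : ℕ) : ℕ → FF m N r → FF m N r → FF m N r
  | 0, _, f => f
  | c + 1, tv, f => TB m N r (e + c) (tv * tt' m N r) (rowOps e c (tv * tt' m N r) f)

/-- Application of the operators of the `i`-th row (from the top) of a Young diagram,
boxes `(i,1), …, (i,c)`, the box `(i,j)` contributing `T_{n+j-i}(…)` (`1`-indexed, so the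
Baxterised operator with `0`-indexed label `n+j-i-1`), the box `(i,1)` acting first;
`lab i j` stands for `t` raised to the spectral parameter of box `(i,j)`. -/
def rowApply (n : ℕ) (lab : ℕ → ℕ → FF m N r) (i : ℕ) : ℕ → FF m N r → FF m N r
  | 0, f => f
  | j + 1, f => TB m N r (n + (j + 1) - i - 1) (lab i (j + 1)) (rowApply n lab i j f)

/-- Application of all box operators of the Young diagram of `lam` (row `i` from the top
having `lam (n-i)` boxes), the rows being applied from top to bottom. This realises the
product `∏_{(i,j) ∈ λ} T_{n+j-i}(…)` where the operator of box `(i,j)` acts before those of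
boxes `(i+1,j)` and `(i,j+1)`. -/
def boxApply (n : ℕ) (lam : ℕ → ℕ) (lab : ℕ → ℕ → FF m N r) : ℕ → FF m N r → FF m N r
  | 0, f => f
  | i + 1, f => rowApply m N r n lab (i + 1) (lam (n - (i + 1))) (boxApply n lam lab i f)

/-- `ΔΔ = Δ_t(z_1,…,z_n) Δ_t(z_{n+1},…,z_{2n})` (here `N = 2n`). -/
def DDl (n : ℕ) : FF m N r := Delt m N r 0 n * Delt m N r n (2 * n)

/-- The deformed specialised Macdonald polynomial `M_λ(u_1, …, u_{n-1})`:
the box `(i,j)` of `λ` contributes `T_{n+j-i}(u_{n-i} + n - i - j + 1)`;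
`tu k` stands for `t^{u_k}`. -/
def Mac (n : ℕ) (lam : ℕ → ℕ) (tu : ℕ → FF m N r) : FF m N r :=
  boxApply m N r n lam (fun i j => tu (n - i) * tt' m N r ^ (n - i - j + 1)) (n - 1)
    (DDl m N r n)

/-- The Kazhdan-Lusztig labels: `v_{ij} = max (v_{i+1,j}, v_{i,j+1}) + 1` for a box of `λ`,
and `0` outside of `λ` (computed with fuel). -/
def klv (n : ℕ) (lam : ℕ → ℕ) : ℕ → ℕ → ℕ → ℕ
  | 0, _, _ => 0
  | fuel + 1, i, j =>
      if 1 ≤ i ∧ i ≤ n - 1 ∧ 1 ≤ j ∧ j ≤ lam (n - i) then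
        max (klv n lam fuel (i + 1) j) (klv n lam fuel i (j + 1)) + 1
      else 0

/-- The Kazhdan-Lusztig label of box `(i,j)`. -/
def klLabel (n : ℕ) (lam : ℕ → ℕ) (i j : ℕ) : ℕ := klv n lam (2 * n) i j

/-- The Kazhdan-Lusztig element `KL_λ = (∏_{(i,j) ∈ λ} T_{n+j-i}(v_{ij})) ΔΔ`. -/
def KL (n : ℕ) (lam : ℕ → ℕ) : FF m N r :=
  boxApply m N r n lam (fun i j => tt' m N r ^ klLabel n lam i j) (n - 1) (DDl m N r n)

/-- Evaluation `z_1 = ⋯ = z_N = 1`, computed on the reduced numerator and denominator. -/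
def evalZ (F : FF m N r) : FF m N r :=
  aeval (fun v : Var m N r =>
      match v with
      | Sum.inl (Sum.inr _) => 1
      | v => algebraMap (PR m N r) (FF m N r) (X v))
    (IsFractionRing.num (PR m N r) F) /
  aeval (fun v : Var m N r =>
      match v with
      | Sum.inl (Sum.inr _) => 1
      | v => algebraMap (PR m N r) (FF m N r) (X v))
    ((IsFractionRing.den (PR m N r) F) : PR m N r)

variable {R : Type*} [CommRing R]

/-- The polynomial `∏_{k=0}^{n-1} (1 + y_k x_{k+1}) ∏_{1 ≤ i < j ≤ n} (x_j - x_i)(1 + x_i x_j + τ x_j)`. -/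
def Apoly (n : ℕ) (τ : R) (y : ℕ → R) : MvPolynomial (Fin n) R :=
  (∏ k : Fin n, (1 + MvPolynomial.C (y (k : ℕ)) * MvPolynomial.X k)) *
    ∏ p ∈ Finset.univ.filter (fun p : Fin n × Fin n => p.1 < p.2),
      (MvPolynomial.X p.2 - MvPolynomial.X p.1) *
        (1 + MvPolynomial.X p.1 * MvPolynomial.X p.2 + MvPolynomial.C τ * MvPolynomial.X p.2)

/-- The constant term
`A_{a_1,…,a_{n-1}}(τ, y_1, …, y_{n-1}) = CT(∏ (1 + y_k x_{k+1}) x_{k+1}^{-a_k+1} ∏_{i<j} (x_j-x_i)(1+x_i x_j+τ x_j))`,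
extracted as the coefficient of `∏ x_{k+1}^{a_k - 1}`. -/
def Act (n : ℕ) (τ : R) (y : ℕ → R) (a : ℕ → ℕ) : R :=
  MvPolynomial.coeff (Finsupp.equivFunOnFinite.symm fun k : Fin n => a (k : ℕ) - 1)
    (Apoly n τ y)

/-- The TSSCPP constant term
`N(t_0,…,t_{n-1}) = CT(∏_{i<j} (x_j-x_i)(1+t_i x_j)/(1-x_i x_j) ∏_i (1+t_0 x_i) x_i^{-2i+2}/(1-x_i²))`. -/
def Nct (n : ℕ) (tv : ℕ → R) : R :=
  MvPowerSeries.coeff (R := R) (Finsupp.equivFunOnFinite.symm fun k : Fin n => 2 * (k : ℕ))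
    ((∏ p ∈ Finset.univ.filter (fun p : Fin n × Fin n => p.1 < p.2),
        ((MvPowerSeries.X p.2 - MvPowerSeries.X p.1) *
          (1 + MvPowerSeries.C (σ := Fin n) (R := R) (tv ((p.1 : ℕ) + 1)) * MvPowerSeries.X p.2) *
          MvPowerSeries.invOfUnit (1 - MvPowerSeries.X p.1 * MvPowerSeries.X p.2) 1)) *
      ∏ k : Fin n,
        ((1 + MvPowerSeries.C (σ := Fin n) (R := R) (tv 0) * MvPowerSeries.X k) *
          MvPowerSeries.invOfUnit (1 - MvPowerSeries.X k ^ 2) 1))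



private lemma ne_zero_of_eval' {σ : Type*} (p : MvPolynomial σ ℚ) (f : σ → ℚ)
    (h : MvPolynomial.eval f p ≠ 0) : p ≠ 0 := fun hp => h (by simp [hp])

private lemma algMap_ne_zero {m N r : ℕ} {p : PR m N r} (h : p ≠ 0) :
    algebraMap (PR m N r) (FF m N r) p ≠ 0 :=
  (map_ne_zero_iff _ (IsFractionRing.injective _ _)).mpr h

private lemma sw_X {m N r : ℕ} (i : ℕ) (h : i + 1 < N) (v : Var m N r) :
    sw m N r i (algebraMap (PR m N r) (FF m N r) (X v)) =
      algebraMap (PR m N r) (FF m N r)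
        (X (Equiv.swap (Sum.inl (Sum.inr (⟨i, Nat.lt_of_succ_lt h⟩ : Fin N)) : Var m N r)
            (Sum.inl (Sum.inr (⟨i + 1, h⟩ : Fin N))) v)) := by
  rw [sw, dif_pos h, IsFractionRing.ringEquivOfRingEquiv_algebraMap]
  simp

set_option maxHeartbeats 2000000 in
/-- With `w = wv 0 N 1 0` a constant parameter (fixed by the `s_i`),
for all `1 ≤ i ≤ N-1` (here `0`-indexed: `i + 2 ≤ N`), the operator `T_i(1) = T_i + t⁻¹`
satisfies
`T_i(1)[Δ_t(z_i, z_{i+1}) / ((w - z_i)(t w - t⁻¹ z_{i+1}))]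
  = Δ_t(z_i, z_{i+1}) (1/((w - z_i)(w - z_{i+1})) + 1/((t w - t⁻¹ z_i)(t w - t⁻¹ z_{i+1})))`,
where `Δ_t(z_i, z_{i+1}) = t z_i - t⁻¹ z_{i+1}` and `T_i(1)` is the Baxterised operator at
`u = 1`, i.e. `t^u = t`. -/
theorem baxterised_on_wavefunction (N : ℕ) (hN : 2 ≤ N) (i : ℕ) (hi : i + 2 ≤ N) :
    TB 0 N 1 i (tt' 0 N 1)
        ((tt' 0 N 1 * zn 0 N 1 i - (tt' 0 N 1)⁻¹ * zn 0 N 1 (i + 1)) /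
          ((wv 0 N 1 0 - zn 0 N 1 i) *
            (tt' 0 N 1 * wv 0 N 1 0 - (tt' 0 N 1)⁻¹ * zn 0 N 1 (i + 1)))) =
      (tt' 0 N 1 * zn 0 N 1 i - (tt' 0 N 1)⁻¹ * zn 0 N 1 (i + 1)) *
        (1 / ((wv 0 N 1 0 - zn 0 N 1 i) * (wv 0 N 1 0 - zn 0 N 1 (i + 1))) +
          1 / ((tt' 0 N 1 * wv 0 N 1 0 - (tt' 0 N 1)⁻¹ * zn 0 N 1 i) *
            (tt' 0 N 1 * wv 0 N 1 0 - (tt' 0 N 1)⁻¹ * zn 0 N 1 (i + 1)))) := by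
  have hiN : i < N := by omega
  have hjN : i + 1 < N := by omega
  set vt : Var 0 N 1 := Sum.inl (Sum.inl 0) with hvt
  set vi : Var 0 N 1 := Sum.inl (Sum.inr ⟨i, hiN⟩) with hvi
  set vj : Var 0 N 1 := Sum.inl (Sum.inr ⟨i + 1, hjN⟩) with hvj
  set vw : Var 0 N 1 := Sum.inr ⟨0, Nat.zero_lt_one⟩ with hvw
  set A := algebraMap (PR 0 N 1) (FF 0 N 1) with hA
  have hzi : zn 0 N 1 i = A (X vi) := by simp [zn, hiN, hvi, hA]
  have hzj : zn 0 N 1 (i + 1) = A (X vj) := by simp [zn, hjN, hvj, hA]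
  have htE : tt' 0 N 1 = A (X vt) := by simp [tt', pa, hvt, hA]
  have hwE : wv 0 N 1 0 = A (X vw) := by simp [wv, hvw, hA]
  have hti : vt ≠ vi := by simp [hvt, hvi]
  have htj : vt ≠ vj := by simp [hvt, hvj]
  have hij : vi ≠ vj := by simp [hvi, hvj, Fin.ext_iff]
  have hwi : vw ≠ vi := by simp [hvw, hvi]
  have hwj : vw ≠ vj := by simp [hvw, hvj]
  have htw : vt ≠ vw := by simp [hvt, hvw]
  -- nonzero facts
  have ht0 : tt' 0 N 1 ≠ 0 := by
    rw [htE]; exact algMap_ne_zero (ne_zero_of_eval' _ (fun _ => 1) (by simp))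
  have htt : tt' 0 N 1 - (tt' 0 N 1)⁻¹ ≠ 0 := by
    have h2 : tt' 0 N 1 * tt' 0 N 1 - 1 ≠ 0 := by
      rw [htE, ← map_mul, ← map_one A, ← map_sub]
      exact algMap_ne_zero (ne_zero_of_eval' _ (fun _ => 2) (by norm_num))
    have : tt' 0 N 1 - (tt' 0 N 1)⁻¹ = (tt' 0 N 1 * tt' 0 N 1 - 1) * (tt' 0 N 1)⁻¹ := by
      field_simp
    rw [this]
    exact mul_ne_zero h2 (inv_ne_zero ht0)
  have hzz : zn 0 N 1 i - zn 0 N 1 (i + 1) ≠ 0 := by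
    rw [hzi, hzj, ← map_sub]
    refine algMap_ne_zero (ne_zero_of_eval' _ (fun v => if v = vi then 1 else 0) ?_)
    simp [Ne.symm hij]
  have hwzi : wv 0 N 1 0 - zn 0 N 1 i ≠ 0 := by
    rw [hwE, hzi, ← map_sub]
    refine algMap_ne_zero (ne_zero_of_eval' _ (fun v => if v = vw then 1 else 0) ?_)
    simp [Ne.symm hwi]
  have hwzj : wv 0 N 1 0 - zn 0 N 1 (i + 1) ≠ 0 := by
    rw [hwE, hzj, ← map_sub]
    refine algMap_ne_zero (ne_zero_of_eval' _ (fun v => if v = vw then 1 else 0) ?_)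
    simp [Ne.symm hwj]
  have key : ∀ (u : Var 0 N 1), u ≠ vt → u ≠ vw →
      tt' 0 N 1 * wv 0 N 1 0 - (tt' 0 N 1)⁻¹ * A (X u) ≠ 0 := by
    intro u hut huw
    have h2 : tt' 0 N 1 * tt' 0 N 1 * wv 0 N 1 0 - A (X u) ≠ 0 := by
      rw [htE, hwE, ← map_mul, ← map_mul, ← map_sub]
      refine algMap_ne_zero (ne_zero_of_eval' _ (fun v => if v = u then 0 else 1) ?_)
      simp [hut.symm, huw.symm, Ne.symm hut, Ne.symm huw]
    have : tt' 0 N 1 * wv 0 N 1 0 - (tt' 0 N 1)⁻¹ * A (X u) =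
        (tt' 0 N 1 * tt' 0 N 1 * wv 0 N 1 0 - A (X u)) * (tt' 0 N 1)⁻¹ := by
      field_simp
    rw [this]
    exact mul_ne_zero h2 (inv_ne_zero ht0)
  have htwzi : tt' 0 N 1 * wv 0 N 1 0 - (tt' 0 N 1)⁻¹ * zn 0 N 1 i ≠ 0 := by
    rw [hzi]; exact key vi (Ne.symm hti) (Ne.symm hwi)
  have htwzj : tt' 0 N 1 * wv 0 N 1 0 - (tt' 0 N 1)⁻¹ * zn 0 N 1 (i + 1) ≠ 0 := by
    rw [hzj]; exact key vj (Ne.symm htj) (Ne.symm hwj)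
  -- action of sw
  have swt : sw 0 N 1 i (tt' 0 N 1) = tt' 0 N 1 := by
    rw [htE, sw_X i hjN, Equiv.swap_apply_of_ne_of_ne hti htj]
  have sww : sw 0 N 1 i (wv 0 N 1 0) = wv 0 N 1 0 := by
    rw [hwE, sw_X i hjN, Equiv.swap_apply_of_ne_of_ne hwi hwj]
  have swzi : sw 0 N 1 i (zn 0 N 1 i) = zn 0 N 1 (i + 1) := by
    rw [hzi, hzj, sw_X i hjN]
    congr 1
    exact congrArg X (Equiv.swap_apply_left _ _)
  have swzj : sw 0 N 1 i (zn 0 N 1 (i + 1)) = zn 0 N 1 i := by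
    rw [hzi, hzj, sw_X i hjN]
    congr 1
    exact congrArg X (Equiv.swap_apply_right _ _)
  have hsf : sw 0 N 1 i
      ((tt' 0 N 1 * zn 0 N 1 i - (tt' 0 N 1)⁻¹ * zn 0 N 1 (i + 1)) /
        ((wv 0 N 1 0 - zn 0 N 1 i) *
          (tt' 0 N 1 * wv 0 N 1 0 - (tt' 0 N 1)⁻¹ * zn 0 N 1 (i + 1)))) =
      (tt' 0 N 1 * zn 0 N 1 (i + 1) - (tt' 0 N 1)⁻¹ * zn 0 N 1 i) /
        ((wv 0 N 1 0 - zn 0 N 1 (i + 1)) *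
          (tt' 0 N 1 * wv 0 N 1 0 - (tt' 0 N 1)⁻¹ * zn 0 N 1 i)) := by
    simp only [map_div₀, map_mul, map_sub, map_inv₀, swt, sww, swzi, swzj]
  rw [TB, TT, tnum, hsf, div_self htt, div_one]
  rw [show ∀ x y : FF 0 N 1, x - y + y = x from fun x y => by ring]
  rw [div_sub_div _ _ (mul_ne_zero hwzi htwzj) (mul_ne_zero hwzj htwzi)]
  have hkey : (tt' 0 N 1 * zn 0 N 1 i - (tt' 0 N 1)⁻¹ * zn 0 N 1 (i + 1)) *
        ((wv 0 N 1 0 - zn 0 N 1 (i + 1)) *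
          (tt' 0 N 1 * wv 0 N 1 0 - (tt' 0 N 1)⁻¹ * zn 0 N 1 i)) -
      (wv 0 N 1 0 - zn 0 N 1 i) *
          (tt' 0 N 1 * wv 0 N 1 0 - (tt' 0 N 1)⁻¹ * zn 0 N 1 (i + 1)) *
        (tt' 0 N 1 * zn 0 N 1 (i + 1) - (tt' 0 N 1)⁻¹ * zn 0 N 1 i) =
      (zn 0 N 1 i - zn 0 N 1 (i + 1)) *
        ((tt' 0 N 1 * wv 0 N 1 0 - (tt' 0 N 1)⁻¹ * zn 0 N 1 i) *
            (tt' 0 N 1 * wv 0 N 1 0 - (tt' 0 N 1)⁻¹ * zn 0 N 1 (i + 1)) +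
          (wv 0 N 1 0 - zn 0 N 1 i) * (wv 0 N 1 0 - zn 0 N 1 (i + 1))) := by
    field_simp
    ring
  rw [hkey]
  rw [div_mul_div_comm,
    div_add_div _ _ (mul_ne_zero hwzi hwzj) (mul_ne_zero htwzi htwzj), ← mul_div_assoc,
    div_eq_div_iff
      (mul_ne_zero hzz (mul_ne_zero (mul_ne_zero hwzi htwzj) (mul_ne_zero hwzj htwzi)))
      (mul_ne_zero (mul_ne_zero hwzi hwzj) (mul_ne_zero htwzi htwzj))]
  ring


end
end

section
/- Action of the Baxterised operators on the Bethe wave functions: for 1 ≤ i ≤ N−1 and a formal parameter v, with w treated as a constant, T_i(v)[ Δ_t(z_1,…,z_N) φ_i(w) ] = Δ_t(z_1,…,z_N) · ( φ_{i−1}(w) + φ_{i+1}(w) + ([1−v]/[v]) φ_i(w) ), and for every 0 ≤ j ≤ N with j ≠ i, T_i(v)[ Δ_t(z_1,…,z_N) φ_j(w) ] = ([1+v]/[v]) Δ_t(z_1,…,z_N) φ_j(w). -/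
open MvPolynomial Finset

noncomputable section

variable (m N r : ℕ)

variable {R : Type*} [CommRing R]

lemma amap_ne (f : Var 1 N 1 → ℚ) {p : PR 1 N 1} (h : MvPolynomial.eval f p ≠ 0) :
    algebraMap (PR 1 N 1) (FF 1 N 1) p ≠ 0 := by
  intro h0
  have hp : p = 0 := IsFractionRing.injective (PR 1 N 1) (FF 1 N 1) (by simpa using h0)
  rw [hp] at h; simp at h

lemma ht_ne : tt' 1 N 1 ≠ 0 := by
  rw [tt', pa]; exact amap_ne N (fun _ => 1) (by simp)

lemma XX_ne {u v : Var 1 N 1} (h : u ≠ v) :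
    algebraMap (PR 1 N 1) (FF 1 N 1) (X u) - algebraMap (PR 1 N 1) (FF 1 N 1) (X v) ≠ 0 := by
  rw [← map_sub]
  exact amap_ne N (fun x => if x = u then 1 else 0) (by simp [Ne.symm h])

lemma sq_ne_one (u : Var 1 N 1) :
    algebraMap (PR 1 N 1) (FF 1 N 1) (X u) * algebraMap (PR 1 N 1) (FF 1 N 1) (X u) ≠ 1 := by
  rw [← map_mul, show (1 : FF 1 N 1) = algebraMap (PR 1 N 1) (FF 1 N 1) 1 from (map_one _).symm]
  intro h
  have h2 := congrArg (MvPolynomial.eval (fun _ => (2:ℚ)))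
    (IsFractionRing.injective (PR 1 N 1) (FF 1 N 1) h)
  norm_num at h2

lemma sub_inv_ne' {x : FF 1 N 1} (hx : x ≠ 0) (h2 : x * x ≠ 1) : x - x⁻¹ ≠ 0 := by
  intro h
  rw [sub_eq_zero] at h
  have hh : x * x⁻¹ = 1 := mul_inv_cancel₀ hx
  rw [← h] at hh
  exact h2 hh

lemma tmix_ne {u v : Var 1 N 1} (huv : u ≠ v) (hv : v ≠ Sum.inl (Sum.inl 0)) :
    tt' 1 N 1 * algebraMap (PR 1 N 1) (FF 1 N 1) (X u)
      - (tt' 1 N 1)⁻¹ * algebraMap (PR 1 N 1) (FF 1 N 1) (X v) ≠ 0 := by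
  intro h
  have ht := ht_ne N
  have key : tt' 1 N 1 * (tt' 1 N 1 * algebraMap (PR 1 N 1) (FF 1 N 1) (X u)
      - (tt' 1 N 1)⁻¹ * algebraMap (PR 1 N 1) (FF 1 N 1) (X v))
      = algebraMap (PR 1 N 1) (FF 1 N 1)
          (X (Sum.inl (Sum.inl 0)) * X (Sum.inl (Sum.inl 0)) * X u - X v) := by
    rw [map_sub, map_mul, map_mul]
    rw [tt', pa]
    field_simp
  rw [h, mul_zero] at key
  exact amap_ne N (fun x => if x = v then 0 else 1)
    (by simp [Ne.symm hv, huv]) key.symm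

def swnat (i k : ℕ) : ℕ := if k = i then i + 1 else if k = i + 1 then i else k

lemma swnat_invol (i k : ℕ) : swnat i (swnat i k) = k := by
  unfold swnat; split_ifs <;> omega

lemma sw_amap (i : ℕ) (h : i + 1 < N) (p : PR 1 N 1) :
    sw 1 N 1 i (algebraMap (PR 1 N 1) (FF 1 N 1) p)
      = algebraMap (PR 1 N 1) (FF 1 N 1)
          (rename (Equiv.swap ((Sum.inl (Sum.inr (⟨i, Nat.lt_of_succ_lt h⟩ : Fin N))) : Var 1 N 1)
            (Sum.inl (Sum.inr (⟨i + 1, h⟩ : Fin N)))) p) := by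
  rw [sw, dif_pos h]
  exact IsFractionRing.ringEquivOfRingEquiv_algebraMap _ p

lemma sw_zn (i k : ℕ) (h : i + 1 < N) :
    sw 1 N 1 i (zn 1 N 1 k) = zn 1 N 1 (swnat i k) := by
  by_cases hk : k < N
  · rw [zn, dif_pos hk, sw_amap N i h, rename_X]
    rcases eq_or_ne k i with rfl | hki
    · rw [show (Sum.inl (Sum.inr (⟨k, hk⟩ : Fin N)) : Var 1 N 1)
          = Sum.inl (Sum.inr (⟨k, Nat.lt_of_succ_lt h⟩ : Fin N)) from rfl,
        Equiv.swap_apply_left]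
      rw [show swnat k k = k + 1 from by simp [swnat]]
      rw [zn, dif_pos h]
    · rcases eq_or_ne k (i + 1) with heq | hki1
      · subst heq
        rw [show (Sum.inl (Sum.inr (⟨i + 1, hk⟩ : Fin N)) : Var 1 N 1)
            = Sum.inl (Sum.inr (⟨i + 1, h⟩ : Fin N)) from rfl,
          Equiv.swap_apply_right]
        rw [show swnat i (i + 1) = i from by simp [swnat]]
        rw [zn, dif_pos (Nat.lt_of_succ_lt h)]
      · rw [Equiv.swap_apply_of_ne_of_ne (by simp [hki]) (by simp [hki1])]
        rw [show swnat i k = k from by simp [swnat, hki, hki1]]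
        rw [zn, dif_pos hk]
  · rw [show swnat i k = k from by simp only [swnat]; split_ifs <;> omega]
    simp [zn, dif_neg hk]

lemma sw_fix (i : ℕ) {u : Var 1 N 1} (hu : ∀ j : Fin N, u ≠ Sum.inl (Sum.inr j)) :
    sw 1 N 1 i (algebraMap (PR 1 N 1) (FF 1 N 1) (X u))
      = algebraMap (PR 1 N 1) (FF 1 N 1) (X u) := by
  by_cases h : i + 1 < N
  · rw [sw_amap N i h, rename_X, Equiv.swap_apply_of_ne_of_ne (hu _) (hu _)]
  · rw [sw, dif_neg h]; rfl

lemma sw_tt (i : ℕ) : sw 1 N 1 i (tt' 1 N 1) = tt' 1 N 1 := by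
  rw [tt', pa]; exact sw_fix N i (by intro j hj; simp at hj)

lemma sw_pa1 (i : ℕ) : sw 1 N 1 i (pa 1 N 1 1) = pa 1 N 1 1 := by
  rw [pa]; exact sw_fix N i (by intro j hj; simp at hj)

lemma sw_wv (i : ℕ) : sw 1 N 1 i (wv 1 N 1 0) = wv 1 N 1 0 := by
  rw [wv, dif_pos (by norm_num)]
  exact sw_fix N i (by intro j hj; simp at hj)

lemma prod_invol {α β : Type*} [DecidableEq α] [CommMonoid β] {s : Finset α} (e : α → α)
    (he : ∀ x ∈ s, e x ∈ s) (hinv : ∀ x ∈ s, e (e x) = x) (G : α → β) :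
    ∏ x ∈ s, G (e x) = ∏ x ∈ s, G x :=
  Finset.prod_nbij' e e he he hinv hinv (fun _ _ => rfl)

def pairsF (n : ℕ) : Finset (ℕ × ℕ) := (range n ×ˢ range n).filter fun p => p.1 < p.2

lemma Delt_pairs :
    Delt 1 N 1 0 N
      = ∏ p ∈ pairsF N, (tt' 1 N 1 * zn 1 N 1 p.1 - (tt' 1 N 1)⁻¹ * zn 1 N 1 p.2) := by
  rw [Delt, Finset.prod_sigma']
  refine Finset.prod_nbij' (fun x => (x.2, x.1)) (fun p => ⟨p.2, p.1⟩) ?_ ?_ ?_ ?_ ?_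
  · intro a ha; simp only [mem_sigma, mem_Ico, pairsF, mem_filter, mem_product, mem_range] at ha ⊢
    omega
  · intro a ha; simp only [mem_sigma, mem_Ico, pairsF, mem_filter, mem_product, mem_range] at ha ⊢
    omega
  · intro a _; rfl
  · intro a _; rfl
  · intro a _; rfl

lemma prod_pairs_swap {β : Type*} [CommMonoid β] (i : ℕ) (h : i + 1 < N) (G : ℕ → ℕ → β) :
    (∏ p ∈ pairsF N, G (swnat i p.1) (swnat i p.2)) * G i (i + 1)
      = G (i + 1) i * ∏ p ∈ pairsF N, G p.1 p.2 := by
  have hmem : ((i, i + 1) : ℕ × ℕ) ∈ pairsF N := by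
    simp only [pairsF, mem_filter, mem_product, mem_range]; omega
  rw [← Finset.mul_prod_erase _ (fun p => G (swnat i p.1) (swnat i p.2)) hmem,
      ← Finset.mul_prod_erase _ (fun p => G p.1 p.2) hmem]
  have h1 : ∏ p ∈ (pairsF N).erase (i, i + 1), G (swnat i p.1) (swnat i p.2)
      = ∏ p ∈ (pairsF N).erase (i, i + 1), G p.1 p.2 := by
    refine prod_invol (fun p => (swnat i p.1, swnat i p.2)) ?_ ?_ (fun p => G p.1 p.2)
    · intro p hp
      simp only [mem_erase, pairsF, mem_filter, mem_product, mem_range, Prod.ext_iff, ne_eq,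
        not_and] at hp ⊢
      simp only [swnat]
      obtain ⟨h1, ⟨h2, h3⟩, h4⟩ := hp
      split_ifs <;> omega
    · intro p _; simp [swnat_invol]
  rw [h1, show swnat i i = i + 1 from by simp [swnat],
      show swnat i (i + 1) = i from by simp [swnat]]
  rw [mul_right_comm, mul_assoc]

lemma sw_Delt (i : ℕ) (h : i + 1 < N) :
    sw 1 N 1 i (Delt 1 N 1 0 N) * (tt' 1 N 1 * zn 1 N 1 i - (tt' 1 N 1)⁻¹ * zn 1 N 1 (i + 1))
      = (tt' 1 N 1 * zn 1 N 1 (i + 1) - (tt' 1 N 1)⁻¹ * zn 1 N 1 i) * Delt 1 N 1 0 N := by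
  rw [Delt_pairs, map_prod]
  have hfac : ∀ p ∈ pairsF N,
      sw 1 N 1 i (tt' 1 N 1 * zn 1 N 1 p.1 - (tt' 1 N 1)⁻¹ * zn 1 N 1 p.2)
        = tt' 1 N 1 * zn 1 N 1 (swnat i p.1) - (tt' 1 N 1)⁻¹ * zn 1 N 1 (swnat i p.2) := by
    intro p _
    rw [map_sub, map_mul, map_mul, map_inv₀, sw_tt, sw_zn N i _ h, sw_zn N i _ h]
  rw [Finset.prod_congr rfl hfac]
  exact prod_pairs_swap N i h (fun a b => tt' 1 N 1 * zn 1 N 1 a - (tt' 1 N 1)⁻¹ * zn 1 N 1 b)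

lemma sw_phiF (i j : ℕ) (h : i + 1 < N) (hj : j ≤ i ∨ i + 2 ≤ j) :
    sw 1 N 1 i (phiF 1 N 1 j (wv 1 N 1 0)) = phiF 1 N 1 j (wv 1 N 1 0) := by
  rw [phiF, map_mul, map_inv₀, map_inv₀, map_prod, map_prod]
  have h1 : ∀ k, sw 1 N 1 i (wv 1 N 1 0 - zn 1 N 1 k)
      = wv 1 N 1 0 - zn 1 N 1 (swnat i k) := fun k => by
    rw [map_sub, sw_wv, sw_zn N i k h]
  have h2 : ∀ k, sw 1 N 1 i (tt' 1 N 1 * wv 1 N 1 0 - (tt' 1 N 1)⁻¹ * zn 1 N 1 k)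
      = tt' 1 N 1 * wv 1 N 1 0 - (tt' 1 N 1)⁻¹ * zn 1 N 1 (swnat i k) := fun k => by
    rw [map_sub, map_mul, map_mul, map_inv₀, sw_tt, sw_wv, sw_zn N i k h]
  rw [Finset.prod_congr rfl fun k _ => h1 k, Finset.prod_congr rfl fun k _ => h2 k]
  rcases hj with hj | hj
  · have e1 : ∏ k ∈ Finset.range j, (wv 1 N 1 0 - zn 1 N 1 (swnat i k))
        = ∏ k ∈ Finset.range j, (wv 1 N 1 0 - zn 1 N 1 k) :=
      Finset.prod_congr rfl (fun k hk => by
        rw [show swnat i k = k from by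
          simp only [mem_range] at hk; simp only [swnat]; split_ifs <;> omega])
    have e2 : ∏ k ∈ Finset.Ico j N, (tt' 1 N 1 * wv 1 N 1 0 - (tt' 1 N 1)⁻¹ * zn 1 N 1 (swnat i k))
        = ∏ k ∈ Finset.Ico j N, (tt' 1 N 1 * wv 1 N 1 0 - (tt' 1 N 1)⁻¹ * zn 1 N 1 k) :=
      prod_invol (swnat i)
        (fun k hk => by simp only [mem_Ico] at hk ⊢; simp only [swnat]; split_ifs <;> omega)
        (fun k _ => swnat_invol i k)
        (fun k => tt' 1 N 1 * wv 1 N 1 0 - (tt' 1 N 1)⁻¹ * zn 1 N 1 k)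
    rw [e1, e2]
  · have e1 : ∏ k ∈ Finset.range j, (wv 1 N 1 0 - zn 1 N 1 (swnat i k))
        = ∏ k ∈ Finset.range j, (wv 1 N 1 0 - zn 1 N 1 k) :=
      prod_invol (swnat i)
        (fun k hk => by simp only [mem_range] at hk ⊢; simp only [swnat]; split_ifs <;> omega)
        (fun k _ => swnat_invol i k)
        (fun k => wv 1 N 1 0 - zn 1 N 1 k)
    have e2 : ∏ k ∈ Finset.Ico j N, (tt' 1 N 1 * wv 1 N 1 0 - (tt' 1 N 1)⁻¹ * zn 1 N 1 (swnat i k))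
        = ∏ k ∈ Finset.Ico j N, (tt' 1 N 1 * wv 1 N 1 0 - (tt' 1 N 1)⁻¹ * zn 1 N 1 k) :=
      Finset.prod_congr rfl (fun k hk => by
        rw [show swnat i k = k from by
          simp only [mem_Ico] at hk; simp only [swnat]; split_ifs <;> omega])
    rw [e1, e2]

lemma phiF_lo (i : ℕ) (h : i + 1 < N) :
    phiF 1 N 1 i (wv 1 N 1 0)
      = (∏ k ∈ Finset.range i, (wv 1 N 1 0 - zn 1 N 1 k))⁻¹ *
        ((tt' 1 N 1 * wv 1 N 1 0 - (tt' 1 N 1)⁻¹ * zn 1 N 1 i) *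
          ((tt' 1 N 1 * wv 1 N 1 0 - (tt' 1 N 1)⁻¹ * zn 1 N 1 (i + 1)) *
            ∏ k ∈ Finset.Ico (i + 2) N, (tt' 1 N 1 * wv 1 N 1 0 - (tt' 1 N 1)⁻¹ * zn 1 N 1 k)))⁻¹ := by
  rw [phiF, Finset.prod_eq_prod_Ico_succ_bot (Nat.lt_of_succ_lt h),
    Finset.prod_eq_prod_Ico_succ_bot h]

lemma phiF_mid (i : ℕ) (h : i + 1 < N) :
    phiF 1 N 1 (i + 1) (wv 1 N 1 0)
      = ((∏ k ∈ Finset.range i, (wv 1 N 1 0 - zn 1 N 1 k)) * (wv 1 N 1 0 - zn 1 N 1 i))⁻¹ *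
        ((tt' 1 N 1 * wv 1 N 1 0 - (tt' 1 N 1)⁻¹ * zn 1 N 1 (i + 1)) *
          ∏ k ∈ Finset.Ico (i + 2) N, (tt' 1 N 1 * wv 1 N 1 0 - (tt' 1 N 1)⁻¹ * zn 1 N 1 k))⁻¹ := by
  rw [phiF, Finset.prod_range_succ, Finset.prod_eq_prod_Ico_succ_bot h]

lemma phiF_hi (i : ℕ) :
    phiF 1 N 1 (i + 2) (wv 1 N 1 0)
      = ((∏ k ∈ Finset.range i, (wv 1 N 1 0 - zn 1 N 1 k)) * (wv 1 N 1 0 - zn 1 N 1 i) *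
          (wv 1 N 1 0 - zn 1 N 1 (i + 1)))⁻¹ *
        (∏ k ∈ Finset.Ico (i + 2) N, (tt' 1 N 1 * wv 1 N 1 0 - (tt' 1 N 1)⁻¹ * zn 1 N 1 k))⁻¹ := by
  rw [phiF, Finset.prod_range_succ, Finset.prod_range_succ]

lemma sw_phiF_mid (i : ℕ) (h : i + 1 < N) :
    sw 1 N 1 i (phiF 1 N 1 (i + 1) (wv 1 N 1 0))
      = ((∏ k ∈ Finset.range i, (wv 1 N 1 0 - zn 1 N 1 k)) * (wv 1 N 1 0 - zn 1 N 1 (i + 1)))⁻¹ *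
        ((tt' 1 N 1 * wv 1 N 1 0 - (tt' 1 N 1)⁻¹ * zn 1 N 1 i) *
          ∏ k ∈ Finset.Ico (i + 2) N, (tt' 1 N 1 * wv 1 N 1 0 - (tt' 1 N 1)⁻¹ * zn 1 N 1 k))⁻¹ := by
  rw [phiF, map_mul, map_inv₀, map_inv₀, map_prod, map_prod]
  have h1 : ∀ k, sw 1 N 1 i (wv 1 N 1 0 - zn 1 N 1 k)
      = wv 1 N 1 0 - zn 1 N 1 (swnat i k) := fun k => by
    rw [map_sub, sw_wv, sw_zn N i k h]
  have h2 : ∀ k, sw 1 N 1 i (tt' 1 N 1 * wv 1 N 1 0 - (tt' 1 N 1)⁻¹ * zn 1 N 1 k)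
      = tt' 1 N 1 * wv 1 N 1 0 - (tt' 1 N 1)⁻¹ * zn 1 N 1 (swnat i k) := fun k => by
    rw [map_sub, map_mul, map_mul, map_inv₀, sw_tt, sw_wv, sw_zn N i k h]
  rw [Finset.prod_congr rfl fun k _ => h1 k, Finset.prod_congr rfl fun k _ => h2 k]
  rw [Finset.prod_range_succ, Finset.prod_eq_prod_Ico_succ_bot h]
  rw [show swnat i i = i + 1 from by simp [swnat],
    show swnat i (i + 1) = i from by simp [swnat]]
  have e1 : ∏ k ∈ Finset.range i, (wv 1 N 1 0 - zn 1 N 1 (swnat i k))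
      = ∏ k ∈ Finset.range i, (wv 1 N 1 0 - zn 1 N 1 k) :=
    Finset.prod_congr rfl (fun k hk => by
      rw [show swnat i k = k from by
        simp only [mem_range] at hk; simp only [swnat]; split_ifs <;> omega])
  have e2 : ∏ k ∈ Finset.Ico (i + 2) N, (tt' 1 N 1 * wv 1 N 1 0 - (tt' 1 N 1)⁻¹ * zn 1 N 1 (swnat i k))
      = ∏ k ∈ Finset.Ico (i + 2) N, (tt' 1 N 1 * wv 1 N 1 0 - (tt' 1 N 1)⁻¹ * zn 1 N 1 k) :=
    Finset.prod_congr rfl (fun k hk => by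
      rw [show swnat i k = k from by
        simp only [mem_Ico] at hk; simp only [swnat]; split_ifs <;> omega])
  rw [e1, e2]

lemma zz_ne {i j : ℕ} (hi : i < N) (hj : j < N) (hij : i ≠ j) :
    zn 1 N 1 i - zn 1 N 1 j ≠ 0 := by
  simp only [zn]; rw [dif_pos hi, dif_pos hj]
  exact XX_ne N (by simp [hij])

lemma wz_ne {k : ℕ} (hk : k < N) : wv 1 N 1 0 - zn 1 N 1 k ≠ 0 := by
  rw [wv, dif_pos (by norm_num), zn, dif_pos hk]
  exact XX_ne N (by simp)

lemma tw_ne {k : ℕ} (hk : k < N) :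
    tt' 1 N 1 * wv 1 N 1 0 - (tt' 1 N 1)⁻¹ * zn 1 N 1 k ≠ 0 := by
  rw [wv, dif_pos (by norm_num), zn, dif_pos hk]
  exact tmix_ne N (by simp) (by simp)

lemma tz_ne {i j : ℕ} (hi : i < N) (hj : j < N) (hij : i ≠ j) :
    tt' 1 N 1 * zn 1 N 1 i - (tt' 1 N 1)⁻¹ * zn 1 N 1 j ≠ 0 := by
  simp only [zn]; rw [dif_pos hi, dif_pos hj]
  exact tmix_ne N (by simp [hij]) (by simp)

lemma lemA0 {K : Type*} [Field K] (T w zi zj : K) (hT : T ≠ 0)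
    (hd : zi - zj ≠ 0) (hg : T * zi - T⁻¹ * zj ≠ 0)
    (hwi : w - zi ≠ 0) (hwj : w - zj ≠ 0)
    (hti : T * w - T⁻¹ * zi ≠ 0) (htj : T * w - T⁻¹ * zj ≠ 0) :
    (T * zi - T⁻¹ * zj) / (zi - zj) *
        ((w - zi)⁻¹ * (T * w - T⁻¹ * zj)⁻¹
          - (T * zj - T⁻¹ * zi) * (T * zi - T⁻¹ * zj)⁻¹ * ((w - zj)⁻¹ * (T * w - T⁻¹ * zi)⁻¹))
      = (T * w - T⁻¹ * zi)⁻¹ * (T * w - T⁻¹ * zj)⁻¹ + (w - zi)⁻¹ * (w - zj)⁻¹ := by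
  have hTc := mul_inv_cancel₀ hT
  have hdc := mul_inv_cancel₀ hd
  have hgc := mul_inv_cancel₀ hg
  have hwic := mul_inv_cancel₀ hwi
  have hwjc := mul_inv_cancel₀ hwj
  have htic := mul_inv_cancel₀ hti
  have htjc := mul_inv_cancel₀ htj
  linear_combination (((-1:K) * (T * w - T⁻¹ * zi)⁻¹ * (w - zj)⁻¹ * (zi - zj)⁻¹ * T * zj) + ((T * w - T⁻¹ * zi)⁻¹ * (w - zj)⁻¹ * (zi - zj)⁻¹ * T⁻¹ * zi)) * hgc +
      (((-1:K) * (w - zj)⁻¹ * (zi - zj)⁻¹) + ((T * w - T⁻¹ * zj)⁻¹ * (zi - zj)⁻¹ * T)) * htic +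
      (((w - zi)⁻¹ * (zi - zj)⁻¹) + ((-1:K) * (T * w - T⁻¹ * zi)⁻¹ * (zi - zj)⁻¹ * T)) * htjc +
      (((w - zj)⁻¹ * (zi - zj)⁻¹) + ((-1:K) * (T * w - T⁻¹ * zj)⁻¹ * (zi - zj)⁻¹ * T)) * hwic +
      (((-1:K) * (w - zi)⁻¹ * (zi - zj)⁻¹) + ((T * w - T⁻¹ * zi)⁻¹ * (zi - zj)⁻¹ * T)) * hwjc +
      (((w - zi)⁻¹ * (w - zj)⁻¹) + ((T * w - T⁻¹ * zi)⁻¹ * (T * w - T⁻¹ * zj)⁻¹ * T⁻¹ * T)) * hdc +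
      (((T * w - T⁻¹ * zi)⁻¹ * (T * w - T⁻¹ * zj)⁻¹)) * hTc

lemma lemB {K : Type*} [Field K] (T A X : K) (hT : T ≠ 0) (hA : A ≠ 0)
    (hTT : T - T⁻¹ ≠ 0) (hAA : A - A⁻¹ ≠ 0) :
    -(T⁻¹ * X) + A⁻¹ * ((A - A⁻¹)⁻¹ * (T - T⁻¹)) * X
      = ((T * A⁻¹ - T⁻¹ * A) * (T - T⁻¹)⁻¹) * ((A - A⁻¹)⁻¹ * (T - T⁻¹)) * X := by
  have hTc := mul_inv_cancel₀ hT
  have hAc := mul_inv_cancel₀ hA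
  have hTTc := mul_inv_cancel₀ hTT
  have hAAc := mul_inv_cancel₀ hAA
  linear_combination (((-1:K) * T * X) + (T⁻¹ * X) + ((T - T⁻¹)⁻¹ * T^2 * X) + ((-1:K) * (T - T⁻¹)⁻¹ * T⁻¹ * T * X)) * hAAc +
      ((T * X) + ((-1:K) * (A - A⁻¹)⁻¹ * T * A * X) + ((A - A⁻¹)⁻¹ * T⁻¹ * A * X)) * hTTc

lemma lem1 {K : Type*} [Field K] (T A w zi zj P Q D : K) (hT : T ≠ 0) (hA : A ≠ 0)
    (hd : zi - zj ≠ 0) (hg : T * zi - T⁻¹ * zj ≠ 0)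
    (hTT : T - T⁻¹ ≠ 0) (hAA : A - A⁻¹ ≠ 0)
    (hwi : w - zi ≠ 0) (hwj : w - zj ≠ 0)
    (hti : T * w - T⁻¹ * zi ≠ 0) (htj : T * w - T⁻¹ * zj ≠ 0) :
    (T * zi - T⁻¹ * zj) / (zi - zj) *
        (D * ((P * (w - zi))⁻¹ * ((T * w - T⁻¹ * zj) * Q)⁻¹) -
          (T * zj - T⁻¹ * zi) * D * (T * zi - T⁻¹ * zj)⁻¹ *
            ((P * (w - zj))⁻¹ * ((T * w - T⁻¹ * zi) * Q)⁻¹)) -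
      T⁻¹ * (D * ((P * (w - zi))⁻¹ * ((T * w - T⁻¹ * zj) * Q)⁻¹)) +
      A⁻¹ / ((A - A⁻¹) / (T - T⁻¹)) * (D * ((P * (w - zi))⁻¹ * ((T * w - T⁻¹ * zj) * Q)⁻¹))
      = D * (P⁻¹ * ((T * w - T⁻¹ * zi) * ((T * w - T⁻¹ * zj) * Q))⁻¹ +
          (P * (w - zi) * (w - zj))⁻¹ * Q⁻¹ +
          ((T * A⁻¹ - (T * A⁻¹)⁻¹) / (T - T⁻¹)) / ((A - A⁻¹) / (T - T⁻¹)) *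
            ((P * (w - zi))⁻¹ * ((T * w - T⁻¹ * zj) * Q)⁻¹)) := by
  have hA0 := lemA0 T w zi zj hT hd hg hwi hwj hti htj
  have hB := lemB T A (D * (P⁻¹ * (w - zi)⁻¹ * ((T * w - T⁻¹ * zj)⁻¹ * Q⁻¹))) hT hA hTT hAA
  simp only [div_eq_mul_inv, mul_inv, inv_inv] at hA0 hB ⊢
  linear_combination (D * P⁻¹ * Q⁻¹) * hA0 + hB

lemma lem2 {K : Type*} [Field K] (T A zi zj D F : K) (hT : T ≠ 0) (hA : A ≠ 0)
    (hd : zi - zj ≠ 0) (hg : T * zi - T⁻¹ * zj ≠ 0)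
    (hTT : T - T⁻¹ ≠ 0) (hAA : A - A⁻¹ ≠ 0) :
    (T * zi - T⁻¹ * zj) / (zi - zj) *
        (D * F - (T * zj - T⁻¹ * zi) * D * (T * zi - T⁻¹ * zj)⁻¹ * F) - T⁻¹ * (D * F) +
      A⁻¹ / ((A - A⁻¹) / (T - T⁻¹)) * (D * F)
      = ((T * A - (T * A)⁻¹) / (T - T⁻¹)) / ((A - A⁻¹) / (T - T⁻¹)) * (D * F) := by
  have hTc := mul_inv_cancel₀ hT
  have hdc := mul_inv_cancel₀ hd
  have hgc := mul_inv_cancel₀ hg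
  have hTTc := mul_inv_cancel₀ hTT
  have hqc := mul_inv_cancel₀ (div_ne_zero hAA hTT)
  linear_combination (((-1:K) * T * D * F)) * hqc +
      (((-1:K) * ((A - A⁻¹) / (T - T⁻¹))⁻¹ * A⁻¹ * D * F)) * hTTc +
      (((-1:K) * (zi - zj)⁻¹ * T * zj * D * F) + ((zi - zj)⁻¹ * T⁻¹ * zi * D * F)) * hgc +
      ((T * D * F) + (T⁻¹ * D * F)) * hdc

/-- action of the Baxterised operators on the Bethe wave functions.
Here `pa 1 N 1 1` is the formal parameter `t^v`, `w = wv 1 N 1 0` is a constant, the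
`z`'s and operators are `0`-indexed (the paper's `T_i`, `1 ≤ i ≤ N-1`, is `TB (i-1)`,
and `φ` keeps its indexing `0 ≤ i ≤ N` since it counts factors).  For `1 ≤ i ≤ N-1`:
`T_i(v)[Δ_t(z_1,…,z_N) φ_i(w)] = Δ_t(z_1,…,z_N)(φ_{i-1}(w) + φ_{i+1}(w) + ([1-v]/[v]) φ_i(w))`,
and for `0 ≤ j ≤ N`, `j ≠ i`:
`T_i(v)[Δ_t(z_1,…,z_N) φ_j(w)] = ([1+v]/[v]) Δ_t(z_1,…,z_N) φ_j(w)`;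
`[1-v] = tnum (t · (t^v)⁻¹)`, `[v] = tnum (t^v)`, `[1+v] = tnum (t · t^v)`. -/
theorem baxterised_on_phi (N : ℕ) (hN : 2 ≤ N) (i : ℕ) (hi : i + 2 ≤ N) :
    (TB 1 N 1 i (pa 1 N 1 1) (Delt 1 N 1 0 N * phiF 1 N 1 (i + 1) (wv 1 N 1 0)) =
        Delt 1 N 1 0 N *
          (phiF 1 N 1 i (wv 1 N 1 0) + phiF 1 N 1 (i + 2) (wv 1 N 1 0) +
            tnum 1 N 1 (tt' 1 N 1 * (pa 1 N 1 1)⁻¹) / tnum 1 N 1 (pa 1 N 1 1) *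
              phiF 1 N 1 (i + 1) (wv 1 N 1 0))) ∧
      ∀ j : ℕ, j ≤ N → j ≠ i + 1 →
        TB 1 N 1 i (pa 1 N 1 1) (Delt 1 N 1 0 N * phiF 1 N 1 j (wv 1 N 1 0)) =
          tnum 1 N 1 (tt' 1 N 1 * pa 1 N 1 1) / tnum 1 N 1 (pa 1 N 1 1) *
            (Delt 1 N 1 0 N * phiF 1 N 1 j (wv 1 N 1 0)) := by
  have h1 : i + 1 < N := by omega
  have ht := ht_ne N
  have htt : tt' 1 N 1 - (tt' 1 N 1)⁻¹ ≠ 0 :=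
    sub_inv_ne' N ht (by rw [tt', pa]; exact sq_ne_one N _)
  have ha : pa 1 N 1 1 ≠ 0 := by rw [pa]; exact amap_ne N (fun _ => 1) (by simp)
  have haa : pa 1 N 1 1 - (pa 1 N 1 1)⁻¹ ≠ 0 :=
    sub_inv_ne' N ha (by rw [pa]; exact sq_ne_one N _)
  have hzz : zn 1 N 1 i - zn 1 N 1 (i + 1) ≠ 0 := zz_ne N (by omega) h1 (by omega)
  have hg : tt' 1 N 1 * zn 1 N 1 i - (tt' 1 N 1)⁻¹ * zn 1 N 1 (i + 1) ≠ 0 :=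
    tz_ne N (by omega) h1 (by omega)
  have hswD : sw 1 N 1 i (Delt 1 N 1 0 N)
      = (tt' 1 N 1 * zn 1 N 1 (i + 1) - (tt' 1 N 1)⁻¹ * zn 1 N 1 i) * Delt 1 N 1 0 N *
        (tt' 1 N 1 * zn 1 N 1 i - (tt' 1 N 1)⁻¹ * zn 1 N 1 (i + 1))⁻¹ := by
    rw [eq_mul_inv_iff_mul_eq₀ hg]; exact sw_Delt N i h1
  constructor
  · have hwi : wv 1 N 1 0 - zn 1 N 1 i ≠ 0 := wz_ne N (by omega)
    have hwj : wv 1 N 1 0 - zn 1 N 1 (i + 1) ≠ 0 := wz_ne N h1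
    have hti : tt' 1 N 1 * wv 1 N 1 0 - (tt' 1 N 1)⁻¹ * zn 1 N 1 i ≠ 0 := tw_ne N (by omega)
    have htj : tt' 1 N 1 * wv 1 N 1 0 - (tt' 1 N 1)⁻¹ * zn 1 N 1 (i + 1) ≠ 0 := tw_ne N h1
    rw [TB, TT, tnum, tnum, map_mul, hswD, sw_phiF_mid N i h1, phiF_mid N i h1,
      phiF_lo N i h1, phiF_hi N i]
    exact lem1 _ _ _ _ _ _ _ _ ht ha hzz hg htt haa hwi hwj hti htj
  · intro j hjN hjne
    rw [TB, TT, tnum, tnum, map_mul, hswD, sw_phiF N i j h1 (by omega)]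
    exact lem2 _ _ _ _ _ _ ht ha hzz hg htt haa

end
end

section
/- Initial condition for the two-row integral: for N ≥ 2, Δ_t(z_1,…,z_N) · ∮∮ (w_2 − w_1)(t w_1 − t^{-1} w_2) φ_1(w_1) φ_2(w_2) dw_1 dw_2/(2πi)^2 = Δ_t(z_1, z_2) · Δ_t(z_3,…,z_N), where the double ∮ denotes the iterated sum of residues over the simple poles at w_1 = z_m and w_2 = z_m, m = 1,…,N. -/
open MvPolynomial Finset

noncomputable section

variable (m N r : ℕ)

variable {R : Type*} [CommRing R]

namespace TwoRowAux

abbrev am (N : ℕ) : PR 0 N 2 →+* FF 0 N 2 := algebraMap _ _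

def vT (N : ℕ) : Var 0 N 2 := Sum.inl (Sum.inl 0)
def tP (N : ℕ) : PR 0 N 2 := X (vT N)
def zP (N j : ℕ) : PR 0 N 2 := if h : j < N then X (Sum.inl (Sum.inr ⟨j, h⟩)) else 0
def wP (N k : ℕ) : PR 0 N 2 := if h : k < 2 then X (Sum.inr ⟨k, h⟩) else 0

variable (N : ℕ)

lemma am_tP : am N (tP N) = tt' 0 N 2 := rfl
lemma am_zP (j : ℕ) : am N (zP N j) = zn 0 N 2 j := by
  unfold zP zn; split <;> simp
lemma am_wP (k : ℕ) : am N (wP N k) = wv 0 N 2 k := by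
  unfold wP wv; split <;> simp

lemma am_eq_zero {p : PR 0 N 2} (h : am N p = 0) : p = 0 :=
  IsFractionRing.injective (PR 0 N 2) (FF 0 N 2) (by simpa using h)

lemma am_ne (v : Var 0 N 2 → ℚ) {p : PR 0 N 2} (h : eval v p ≠ 0) : am N p ≠ 0 :=
  fun h0 => h (by rw [am_eq_zero N h0]; simp)

lemma X_sub_X_ne {u v : Var 0 N 2} (huv : u ≠ v) : am N (X u) - am N (X v) ≠ 0 := by
  have h : am N (X u - X v) ≠ 0 := by
    apply am_ne N (fun x => if x = u then 2 else 1)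
    simp [eval_X, Ne.symm huv]
    norm_num
  simpa using h

lemma T_ne : tt' 0 N 2 ≠ 0 := by
  have h : am N (tP N) ≠ 0 := by
    apply am_ne N (fun _ => 1); simp [tP]
  simpa [am_tP] using h

lemma Tsq_ne (u v : Var 0 N 2) : tt' 0 N 2 ^ 2 * am N (X u) - am N (X v) ≠ 0 := by
  have h : am N (tP N ^ 2 * X u - X v) ≠ 0 := by
    apply am_ne N (fun x => if x = vT N then 2 else 1)
    simp only [eval_sub, eval_mul, eval_pow, eval_X, tP]
    split_ifs <;> norm_num
  simpa [am_tP] using h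

def sub1 (N k j : ℕ) (hk : k < 2) (hj : j < N) : Var 0 N 2 → Var 0 N 2 :=
  fun v => if v = Sum.inr (⟨k, hk⟩ : Fin 2) then Sum.inl (Sum.inr (⟨j, hj⟩ : Fin N)) else v

lemma aeval_sub1 (k j : ℕ) (hk : k < 2) (hj : j < N) (P : PR 0 N 2) :
    aeval (fun v : Var 0 N 2 => if v = Sum.inr (⟨k, hk⟩ : Fin 2) then zn 0 N 2 j
      else algebraMap (PR 0 N 2) (FF 0 N 2) (X v)) P
    = am N (rename (sub1 N k j hk hj) P) := by
  induction P using MvPolynomial.induction_on with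
  | C a =>
    rw [rename_C, aeval_C]
    exact (IsScalarTower.algebraMap_apply ℚ (PR 0 N 2) (FF 0 N 2) a)
  | add p q hp hq => simp [hp, hq]
  | mul_X p v hp =>
    simp only [map_mul, hp, rename_X, aeval_X]
    congr 1
    by_cases hv : v = Sum.inr (⟨k, hk⟩ : Fin 2) <;> simp [sub1, hv, zn, hj]

lemma subW_spec (k j : ℕ) (hk : k < 2) (hj : j < N) (x : FF 0 N 2) (p q : PR 0 N 2)
    (hx : x * am N q = am N p) (hq : am N (rename (sub1 N k j hk hj) q) ≠ 0) :
    subW 0 N 2 k (zn 0 N 2 j) x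
      = am N (rename (sub1 N k j hk hj) p) / am N (rename (sub1 N k j hk hj) q) := by
  set f := sub1 N k j hk hj with hf
  have hnum := IsFractionRing.mk'_num_den' (PR 0 N 2) x
  set nu := IsFractionRing.num (PR 0 N 2) x with hnu
  set de := IsFractionRing.den (PR 0 N 2) x with hde
  have hde0 : am N (de : PR 0 N 2) ≠ 0 := by
    have h1 : (de : PR 0 N 2) ≠ 0 := nonZeroDivisors.coe_ne_zero de
    exact fun h => h1 (am_eq_zero N h)
  have hxd : x * am N (de : PR 0 N 2) = am N nu := by
    rw [← hnum, div_mul_cancel₀ _ hde0]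
  have cross : nu * q = p * (de : PR 0 N 2) := by
    apply IsFractionRing.injective (PR 0 N 2) (FF 0 N 2)
    rw [map_mul, map_mul, ← hxd, ← hx]; ring
  have hrp := IsFractionRing.num_den_reduced (PR 0 N 2) x
  have hdvd : (de : PR 0 N 2) ∣ q := by
    apply (hrp.symm).dvd_of_dvd_mul_right
    exact ⟨p, by rw [mul_comm q nu, cross, mul_comm]⟩
  obtain ⟨c, hc⟩ := hdvd
  have hde1 : am N (rename f (de : PR 0 N 2)) ≠ 0 := by
    intro h; apply hq; rw [hc, map_mul, map_mul, h, zero_mul]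
  unfold subW
  rw [dif_pos hk, aeval_sub1 N k j hk hj, aeval_sub1 N k j hk hj, ← hnu, ← hf]
  rw [div_eq_div_iff hde1 hq]
  simp only [← map_mul]
  exact congrArg _ (congrArg _ cross)

end TwoRowAux

namespace TwoRowAux

variable (N : ℕ)

lemma zn_eq {b : ℕ} (hb : b < N) :
    zn 0 N 2 b = am N (X (Sum.inl (Sum.inr ⟨b, hb⟩))) := by
  unfold zn; rw [dif_pos hb]

lemma wv_eq {k : ℕ} (hk : k < 2) :
    wv 0 N 2 k = am N (X (Sum.inr ⟨k, hk⟩)) := by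
  unfold wv; rw [dif_pos hk]

lemma zn_sub_zn_ne {a b : ℕ} (ha : a < N) (hb : b < N) (hab : a ≠ b) :
    zn 0 N 2 a - zn 0 N 2 b ≠ 0 := by
  rw [zn_eq N ha, zn_eq N hb]
  exact X_sub_X_ne N (by simp [Fin.mk.injEq, hab])

lemma wv_sub_zn_ne {k b : ℕ} (hk : k < 2) (hb : b < N) :
    wv 0 N 2 k - zn 0 N 2 b ≠ 0 := by
  rw [zn_eq N hb, wv_eq N hk]
  exact X_sub_X_ne N (by simp)

lemma Tlin_ne (u : Var 0 N 2) {b : ℕ} (hb : b < N) :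
    tt' 0 N 2 * am N (X u) - (tt' 0 N 2)⁻¹ * zn 0 N 2 b ≠ 0 := by
  rw [zn_eq N hb]
  intro h0
  apply Tsq_ne N u (Sum.inl (Sum.inr ⟨b, hb⟩))
  have heq : (tt' 0 N 2 * am N (X u) - (tt' 0 N 2)⁻¹ * am N (X (Sum.inl (Sum.inr ⟨b, hb⟩)))) * tt' 0 N 2
      = tt' 0 N 2 ^ 2 * am N (X u) - am N (X (Sum.inl (Sum.inr ⟨b, hb⟩))) := by
    field_simp [T_ne N] <;> ring
  rw [← heq, h0, zero_mul]

def QW (N : ℕ) (u : Var 0 N 2) (c : ℕ) : PR 0 N 2 :=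
  ∏ k ∈ Finset.Ico c N, (tP N ^ 2 * X u - zP N k)

lemma am_QW (u : Var 0 N 2) (c : ℕ) :
    am N (QW N u c) = tt' 0 N 2 ^ (N - c) *
      ∏ k ∈ Finset.Ico c N, (tt' 0 N 2 * am N (X u) - (tt' 0 N 2)⁻¹ * zn 0 N 2 k) := by
  rw [QW, map_prod]
  have h : ∀ k ∈ Finset.Ico c N, am N (tP N ^ 2 * X u - zP N k)
      = tt' 0 N 2 * (tt' 0 N 2 * am N (X u) - (tt' 0 N 2)⁻¹ * zn 0 N 2 k) := by
    intro k _
    rw [map_sub, map_mul, map_pow, am_tP, am_zP]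
    field_simp [T_ne N] <;> ring
  rw [Finset.prod_congr rfl h, Finset.prod_mul_distrib, Finset.prod_const, Nat.card_Ico]

lemma am_QW_ne (u : Var 0 N 2) (c : ℕ) : am N (QW N u c) ≠ 0 := by
  rw [QW, map_prod]
  apply Finset.prod_ne_zero_iff.mpr
  intro k hk
  have hkN : k < N := (Finset.mem_Ico.mp hk).2
  rw [map_sub, map_mul, map_pow, am_tP]
  have : zP N k = X (Sum.inl (Sum.inr (⟨k, hkN⟩ : Fin N))) := by unfold zP; rw [dif_pos hkN]
  rw [this]
  exact Tsq_ne N _ _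

variable {k j : ℕ} (hk : k < 2) (hj : j < N)

lemma sub1_inl (a : Fin 1 ⊕ Fin N) : sub1 N k j hk hj (Sum.inl a) = Sum.inl a := by
  simp [sub1]

lemma sub1_vw : sub1 N k j hk hj (Sum.inr ⟨k, hk⟩) = Sum.inl (Sum.inr ⟨j, hj⟩) := by
  simp [sub1]

lemma sub1_vw' {k' : ℕ} (hk' : k' < 2) (hne : k' ≠ k) :
    sub1 N k j hk hj (Sum.inr ⟨k', hk'⟩) = Sum.inr ⟨k', hk'⟩ := by
  simp [sub1, Fin.mk.injEq, hne]

lemma rename_sub1_tP : rename (sub1 N k j hk hj) (tP N) = tP N := by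
  simp [tP, vT, rename_X, sub1]

lemma rename_sub1_zP (i : ℕ) : rename (sub1 N k j hk hj) (zP N i) = zP N i := by
  unfold zP; split
  · rw [rename_X, sub1_inl]
  · simp

lemma rename_sub1_wP : rename (sub1 N k j hk hj) (wP N k) = zP N j := by
  rw [show wP N k = X (Sum.inr ⟨k, hk⟩) by unfold wP; rw [dif_pos hk], rename_X, sub1_vw]
  unfold zP; rw [dif_pos hj]

lemma rename_sub1_wP' {k' : ℕ} (hk' : k' < 2) (hne : k' ≠ k) :
    rename (sub1 N k j hk hj) (wP N k') = wP N k' := by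
  rw [show wP N k' = X (Sum.inr ⟨k', hk'⟩) by unfold wP; rw [dif_pos hk'], rename_X,
    sub1_vw' N hk hj hk' hne]

lemma rename_sub1_QW (u : Var 0 N 2) (c : ℕ) :
    rename (sub1 N k j hk hj) (QW N u c) = QW N (sub1 N k j hk hj u) c := by
  rw [QW, QW, map_prod]
  apply Finset.prod_congr rfl
  intro i _
  rw [map_sub, map_mul, map_pow, rename_sub1_tP, rename_X, rename_sub1_zP]

end TwoRowAux

namespace TwoRowAux

def vw0 (N : ℕ) : Var 0 N 2 := Sum.inr ⟨0, by norm_num⟩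
def vw1 (N : ℕ) : Var 0 N 2 := Sum.inr ⟨1, by norm_num⟩

def QZ (N j c : ℕ) : PR 0 N 2 := ∏ k ∈ Finset.Ico c N, (tP N ^ 2 * zP N j - zP N k)

variable (N : ℕ)

lemma am_X_vw0 : am N (X (vw0 N)) = wv 0 N 2 0 := (wv_eq N (by norm_num)).symm
lemma am_X_vw1 : am N (X (vw1 N)) = wv 0 N 2 1 := (wv_eq N (by norm_num)).symm

lemma QZ_eq {j : ℕ} (hj : j < N) (c : ℕ) :
    QZ N j c = QW N (Sum.inl (Sum.inr ⟨j, hj⟩)) c := by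
  unfold QZ QW
  apply Finset.prod_congr rfl
  intro i _
  congr 1
  unfold zP; rw [dif_pos hj]

lemma am_QZ {j : ℕ} (hj : j < N) (c : ℕ) :
    am N (QZ N j c) = tt' 0 N 2 ^ (N - c) *
      ∏ k ∈ Finset.Ico c N, (tt' 0 N 2 * zn 0 N 2 j - (tt' 0 N 2)⁻¹ * zn 0 N 2 k) := by
  rw [QZ_eq N hj, am_QW, ← zn_eq N hj]

lemma am_QZ_ne {j : ℕ} (hj : j < N) (c : ℕ) : am N (QZ N j c) ≠ 0 := by
  rw [QZ_eq N hj]; exact am_QW_ne N _ c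

lemma rename_sub1_QZ {k j : ℕ} (hk : k < 2) (hj : j < N) (i c : ℕ) :
    rename (sub1 N k j hk hj) (QZ N i c) = QZ N i c := by
  unfold QZ
  rw [map_prod]
  apply Finset.prod_congr rfl
  intro l _
  rw [map_sub, map_mul, map_pow, rename_sub1_tP, rename_sub1_zP, rename_sub1_zP]

/-- the integrand -/
def Fdef (N : ℕ) : FF 0 N 2 :=
  (wv 0 N 2 1 - wv 0 N 2 0) *
    (tt' 0 N 2 * wv 0 N 2 0 - (tt' 0 N 2)⁻¹ * wv 0 N 2 1) *
    phiF 0 N 2 1 (wv 0 N 2 0) * phiF 0 N 2 2 (wv 0 N 2 1)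

def p1 (N : ℕ) : PR 0 N 2 :=
  tP N ^ (N - 1) * tP N ^ (N - 2) * ((wP N 1 - wP N 0) * (tP N ^ 2 * wP N 0 - wP N 1))
def q1 (N : ℕ) : PR 0 N 2 :=
  tP N * QW N (vw0 N) 1 * ((wP N 1 - zP N 0) * (wP N 1 - zP N 1)) * QW N (vw1 N) 2
def gp (N : ℕ) : PR 0 N 2 :=
  tP N ^ (N - 1) * tP N ^ (N - 2) * ((wP N 1 - zP N 0) * (tP N ^ 2 * zP N 0 - wP N 1))
def gq (N : ℕ) : PR 0 N 2 :=
  tP N * QZ N 0 1 * ((wP N 1 - zP N 0) * (wP N 1 - zP N 1)) * QW N (vw1 N) 2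
def np (N : ℕ) : PR 0 N 2 :=
  tP N ^ (N - 1) * tP N ^ (N - 2) * (tP N ^ 2 * zP N 0 - zP N 1)
def nq (N : ℕ) : PR 0 N 2 := tP N * QZ N 0 1 * QZ N 1 2

lemma prodW_ne (u : Var 0 N 2) (c : ℕ) :
    (∏ k ∈ Finset.Ico c N, (tt' 0 N 2 * am N (X u) - (tt' 0 N 2)⁻¹ * zn 0 N 2 k)) ≠ 0 := by
  apply Finset.prod_ne_zero_iff.mpr
  intro k hk
  exact Tlin_ne N u (Finset.mem_Ico.mp hk).2

lemma phi1_closed (hN : 2 ≤ N) :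
    phiF 0 N 2 1 (wv 0 N 2 0) =
      tt' 0 N 2 ^ (N - 1) / ((wv 0 N 2 0 - zn 0 N 2 0) * am N (QW N (vw0 N) 1)) := by
  have h0N : 0 < N := by omega
  have hTne := T_ne N
  have hW0Z0 := wv_sub_zn_ne N (show (0:ℕ) < 2 by norm_num) h0N
  unfold phiF
  simp only [Finset.prod_range_one]
  rw [am_QW, am_X_vw0]
  set P0 := ∏ k ∈ Finset.Ico 1 N,
    (tt' 0 N 2 * wv 0 N 2 0 - (tt' 0 N 2)⁻¹ * zn 0 N 2 k) with hP0def
  have hP0 : P0 ≠ 0 := by rw [hP0def, ← am_X_vw0]; exact prodW_ne N _ 1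
  field_simp

lemma phi2_closed (hN : 2 ≤ N) :
    phiF 0 N 2 2 (wv 0 N 2 1) =
      tt' 0 N 2 ^ (N - 2) /
        ((wv 0 N 2 1 - zn 0 N 2 0) * (wv 0 N 2 1 - zn 0 N 2 1) * am N (QW N (vw1 N) 2)) := by
  have h0N : 0 < N := by omega
  have h1N : 1 < N := by omega
  have hTne := T_ne N
  have hW1Z0 := wv_sub_zn_ne N (show (1:ℕ) < 2 by norm_num) h0N
  have hW1Z1 := wv_sub_zn_ne N (show (1:ℕ) < 2 by norm_num) h1N
  unfold phiF
  simp only [Finset.prod_range_succ, Finset.prod_range_zero, one_mul]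
  rw [am_QW, am_X_vw1]
  set P1 := ∏ k ∈ Finset.Ico 2 N,
    (tt' 0 N 2 * wv 0 N 2 1 - (tt' 0 N 2)⁻¹ * zn 0 N 2 k) with hP1def
  have hP1 : P1 ≠ 0 := by rw [hP1def, ← am_X_vw1]; exact prodW_ne N _ 2
  field_simp

set_option maxHeartbeats 1000000 in
lemma L1 (hN : 2 ≤ N) :
    ((wv 0 N 2 0 - zn 0 N 2 0) * Fdef N) * am N (q1 N) = am N (p1 N) := by
  have h0N : 0 < N := by omega
  have h1N : 1 < N := by omega
  have hTne := T_ne N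
  have hW0Z0 := wv_sub_zn_ne N (show (0:ℕ) < 2 by norm_num) h0N
  have hW1Z0 := wv_sub_zn_ne N (show (1:ℕ) < 2 by norm_num) h0N
  have hW1Z1 := wv_sub_zn_ne N (show (1:ℕ) < 2 by norm_num) h1N
  have hQA := am_QW_ne N (vw0 N) 1
  have hQB := am_QW_ne N (vw1 N) 2
  rw [Fdef, phi1_closed N hN, phi2_closed N hN]
  simp only [q1, p1, map_mul, map_sub, map_pow, am_tP, am_zP, am_wP]
  field_simp

lemma am_gq_ne (hN : 2 ≤ N) : am N (gq N) ≠ 0 := by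
  have h0N : 0 < N := by omega
  have h1N : 1 < N := by omega
  simp only [gq, map_mul, map_sub, am_tP, am_wP, am_zP]
  exact mul_ne_zero (mul_ne_zero (mul_ne_zero (T_ne N) (am_QZ_ne N h0N 1))
    (mul_ne_zero (wv_sub_zn_ne N (by norm_num) h0N) (wv_sub_zn_ne N (by norm_num) h1N)))
    (am_QW_ne N _ 2)

lemma L2 (hN : 2 ≤ N) :
    cint 0 N 2 0 (Fdef N) = am N (gp N) / am N (gq N) := by
  have h0N : 0 < N := by omega
  have h1N : 1 < N := by omega
  have h02 : (0:ℕ) < 2 := by norm_num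
  unfold cint
  rw [Finset.sum_eq_single_of_mem 0 (Finset.mem_range.mpr h0N)]
  · -- residue at z_0
    unfold resW
    rw [subW_spec N 0 0 h02 h0N _ (p1 N) (q1 N) (L1 N hN)]
    · congr 1
      · -- rename p1 = gp
        congr 1
        simp only [p1, map_mul, map_sub, map_pow, rename_sub1_tP,
          rename_sub1_wP' N h02 h0N (show (1:ℕ) < 2 by norm_num) one_ne_zero,
          rename_sub1_wP N h02 h0N, gp]
      · -- rename q1 = gq
        congr 1
        simp only [q1, map_mul, map_sub, rename_sub1_tP, rename_sub1_QW,
          rename_sub1_wP' N h02 h0N (show (1:ℕ) < 2 by norm_num) one_ne_zero,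
          rename_sub1_zP, gq]
        rw [show sub1 N 0 0 h02 h0N (vw0 N) = Sum.inl (Sum.inr ⟨0, h0N⟩) from sub1_vw N h02 h0N,
          show sub1 N 0 0 h02 h0N (vw1 N) = vw1 N from sub1_vw' N h02 h0N (by norm_num) one_ne_zero,
          ← QZ_eq N h0N 1]
    · -- nonvanishing of renamed q1
      have : rename (sub1 N 0 0 h02 h0N) (q1 N) = gq N := by
        simp only [q1, map_mul, map_sub, rename_sub1_tP, rename_sub1_QW,
          rename_sub1_wP' N h02 h0N (show (1:ℕ) < 2 by norm_num) one_ne_zero,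
          rename_sub1_zP, gq]
        rw [show sub1 N 0 0 h02 h0N (vw0 N) = Sum.inl (Sum.inr ⟨0, h0N⟩) from sub1_vw N h02 h0N,
          show sub1 N 0 0 h02 h0N (vw1 N) = vw1 N from sub1_vw' N h02 h0N (by norm_num) one_ne_zero,
          ← QZ_eq N h0N 1]
      rw [this]
      exact am_gq_ne N hN
  · -- other residues vanish
    intro j hj hj0
    have hjN : j < N := Finset.mem_range.mp hj
    unfold resW
    have hx : ((wv 0 N 2 0 - zn 0 N 2 j) * Fdef N) * am N (q1 N * (wP N 0 - zP N 0))
        = am N (p1 N * (wP N 0 - zP N j)) := by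
      simp only [map_mul, map_sub, am_wP, am_zP]
      have h := L1 N hN
      linear_combination (wv 0 N 2 0 - zn 0 N 2 j) * h
    rw [subW_spec N 0 j h02 hjN _ _ _ hx]
    · rw [map_mul, map_mul, map_sub, rename_sub1_wP N h02 hjN, rename_sub1_zP, sub_self]
      simp
    · -- nonvanishing
      rw [map_mul, map_mul]
      apply mul_ne_zero
      · have : rename (sub1 N 0 j h02 hjN) (q1 N) =
            tP N * QZ N j 1 * ((wP N 1 - zP N 0) * (wP N 1 - zP N 1)) * QW N (vw1 N) 2 := by
          simp only [q1, map_mul, map_sub, rename_sub1_tP, rename_sub1_QW,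
            rename_sub1_wP' N h02 hjN (show (1:ℕ) < 2 by norm_num) one_ne_zero,
            rename_sub1_zP]
          rw [show sub1 N 0 j h02 hjN (vw0 N) = Sum.inl (Sum.inr ⟨j, hjN⟩) from sub1_vw N h02 hjN,
            show sub1 N 0 j h02 hjN (vw1 N) = vw1 N from sub1_vw' N h02 hjN (by norm_num) one_ne_zero,
            ← QZ_eq N hjN 1]
        rw [this]
        simp only [map_mul, map_sub, am_tP, am_wP, am_zP]
        exact mul_ne_zero (mul_ne_zero (mul_ne_zero (T_ne N) (am_QZ_ne N hjN 1))
          (mul_ne_zero (wv_sub_zn_ne N (by norm_num) h0N) (wv_sub_zn_ne N (by norm_num) h1N)))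
          (am_QW_ne N _ 2)
      · rw [map_sub, rename_sub1_wP N h02 hjN, rename_sub1_zP, map_sub, am_zP, am_zP]
        exact zn_sub_zn_ne N hjN h0N hj0

end TwoRowAux

namespace TwoRowAux

def p21 (N : ℕ) : PR 0 N 2 :=
  tP N ^ (N - 1) * tP N ^ (N - 2) * (tP N ^ 2 * zP N 0 - wP N 1)
def q21 (N : ℕ) : PR 0 N 2 := tP N * QZ N 0 1 * QW N (vw1 N) 2
def q20 (N : ℕ) : PR 0 N 2 :=
  tP N * QZ N 0 1 * (wP N 1 - zP N 1) * QW N (vw1 N) 2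

variable (N : ℕ)

lemma am_nq_ne (hN : 2 ≤ N) : am N (nq N) ≠ 0 := by
  simp only [nq, map_mul]
  exact mul_ne_zero (mul_ne_zero (T_ne N) (am_QZ_ne N (by omega : 0 < N) 1))
    (am_QZ_ne N (by omega : 1 < N) 2)

set_option maxHeartbeats 1000000 in
lemma L3 (hN : 2 ≤ N) :
    cint 0 N 2 1 (am N (gp N) / am N (gq N)) = am N (np N) / am N (nq N) := by
  have h0N : 0 < N := by omega
  have h1N : 1 < N := by omega
  have h12 : (1:ℕ) < 2 := by norm_num
  have hgq := am_gq_ne N hN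
  unfold cint
  rw [Finset.sum_eq_single_of_mem 1 (Finset.mem_range.mpr h1N)]
  · -- residue at z_1
    unfold resW
    have hx : ((wv 0 N 2 1 - zn 0 N 2 1) * (am N (gp N) / am N (gq N))) * am N (q21 N)
        = am N (p21 N) := by
      rw [← mul_div_assoc, div_mul_eq_mul_div, div_eq_iff hgq,
        show wv 0 N 2 1 - zn 0 N 2 1 = am N (wP N 1 - zP N 1) by
          rw [map_sub, am_wP, am_zP]]
      simp only [← map_mul]
      congr 1
      simp only [gp, gq, p21, q21]
      ring
    rw [subW_spec N 1 1 h12 h1N _ _ _ hx]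
    · congr 1
      · congr 1
        simp only [p21, map_mul, map_sub, map_pow, rename_sub1_tP, rename_sub1_zP,
          rename_sub1_wP N h12 h1N, np]
      · congr 1
        simp only [q21, map_mul, rename_sub1_tP, rename_sub1_QZ, rename_sub1_QW]
        rw [show sub1 N 1 1 h12 h1N (vw1 N) = Sum.inl (Sum.inr ⟨1, h1N⟩) from sub1_vw N h12 h1N,
          ← QZ_eq N h1N 2, nq]
    · have : rename (sub1 N 1 1 h12 h1N) (q21 N) = nq N := by
        simp only [q21, map_mul, rename_sub1_tP, rename_sub1_QZ, rename_sub1_QW]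
        rw [show sub1 N 1 1 h12 h1N (vw1 N) = Sum.inl (Sum.inr ⟨1, h1N⟩) from sub1_vw N h12 h1N,
          ← QZ_eq N h1N 2, nq]
      rw [this]
      exact am_nq_ne N hN
  · intro j hj hj1
    have hjN : j < N := Finset.mem_range.mp hj
    unfold resW
    by_cases hj0 : j = 0
    · subst hj0
      have hx : ((wv 0 N 2 1 - zn 0 N 2 0) * (am N (gp N) / am N (gq N))) * am N (q20 N)
          = am N (gp N) := by
        rw [← mul_div_assoc, div_mul_eq_mul_div, div_eq_iff hgq,
          show wv 0 N 2 1 - zn 0 N 2 0 = am N (wP N 1 - zP N 0) by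
            rw [map_sub, am_wP, am_zP]]
        simp only [← map_mul]
        congr 1
        simp only [gp, gq, q20]
        ring
      rw [subW_spec N 1 0 h12 h0N _ _ _ hx]
      · rw [show rename (sub1 N 1 0 h12 h0N) (gp N) = 0 by
          simp only [gp, map_mul, map_sub, map_pow, rename_sub1_tP, rename_sub1_zP,
            rename_sub1_wP N h12 h0N, sub_self, mul_zero, zero_mul]]
        simp
      · have : rename (sub1 N 1 0 h12 h0N) (q20 N)
            = tP N * QZ N 0 1 * (zP N 0 - zP N 1) * QZ N 0 2 := by
          simp only [q20, map_mul, map_sub, rename_sub1_tP, rename_sub1_QZ, rename_sub1_QW,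
            rename_sub1_zP, rename_sub1_wP N h12 h0N]
          rw [show sub1 N 1 0 h12 h0N (vw1 N) = Sum.inl (Sum.inr ⟨0, h0N⟩) from sub1_vw N h12 h0N,
            ← QZ_eq N h0N 2]
        rw [this]
        simp only [map_mul, map_sub, am_tP, am_zP]
        exact mul_ne_zero (mul_ne_zero (mul_ne_zero (T_ne N) (am_QZ_ne N h0N 1))
          (zn_sub_zn_ne N h0N h1N (by norm_num))) (am_QZ_ne N h0N 2)
    · -- j ≥ 2
      have hx : ((wv 0 N 2 1 - zn 0 N 2 j) * (am N (gp N) / am N (gq N))) * am N (gq N)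
          = am N (gp N * (wP N 1 - zP N j)) := by
        rw [mul_assoc, div_mul_cancel₀ _ hgq, map_mul, map_sub, am_wP, am_zP]
        ring
      rw [subW_spec N 1 j h12 hjN _ _ _ hx]
      · rw [map_mul, map_mul, map_sub, rename_sub1_wP N h12 hjN, rename_sub1_zP, sub_self]
        simp
      · have : rename (sub1 N 1 j h12 hjN) (gq N)
            = tP N * QZ N 0 1 * ((zP N j - zP N 0) * (zP N j - zP N 1)) * QZ N j 2 := by
          simp only [gq, map_mul, map_sub, rename_sub1_tP, rename_sub1_QZ,
            rename_sub1_zP, rename_sub1_wP N h12 hjN, rename_sub1_QW]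
          rw [show sub1 N 1 j h12 hjN (vw1 N) = Sum.inl (Sum.inr ⟨j, hjN⟩)
              from sub1_vw N h12 hjN, ← QZ_eq N hjN 2]
        rw [this]
        simp only [map_mul, map_sub, am_tP, am_zP]
        exact mul_ne_zero (mul_ne_zero (mul_ne_zero (T_ne N) (am_QZ_ne N h0N 1))
          (mul_ne_zero (zn_sub_zn_ne N hjN h0N hj0) (zn_sub_zn_ne N hjN h1N hj1)))
          (am_QZ_ne N hjN 2)
  
end TwoRowAux

namespace TwoRowAux

variable (N : ℕ)

lemma delt_base : Delt 0 N 2 0 2 = tt' 0 N 2 * zn 0 N 2 0 - (tt' 0 N 2)⁻¹ * zn 0 N 2 1 := by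
  unfold Delt
  simp [Nat.Ico_zero_eq_range, Finset.prod_range_succ, Finset.prod_range_zero,
    Finset.prod_range_one]

lemma delt_split (n : ℕ) (hn : 2 ≤ n) :
    Delt 0 N 2 0 n =
      (∏ k ∈ Finset.Ico 1 n, (tt' 0 N 2 * zn 0 N 2 0 - (tt' 0 N 2)⁻¹ * zn 0 N 2 k)) *
      (∏ k ∈ Finset.Ico 2 n, (tt' 0 N 2 * zn 0 N 2 1 - (tt' 0 N 2)⁻¹ * zn 0 N 2 k)) *
      Delt 0 N 2 2 n := by
  induction n, hn using Nat.le_induction with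
  | base =>
    rw [delt_base]
    simp [Delt, Finset.Ico_self, Nat.Ico_succ_singleton]
  | succ n hn ih =>
    have e1 : Delt 0 N 2 0 (n + 1) = Delt 0 N 2 0 n *
        ∏ i ∈ Finset.Ico 0 n, (tt' 0 N 2 * zn 0 N 2 i - (tt' 0 N 2)⁻¹ * zn 0 N 2 n) := by
      unfold Delt
      rw [Finset.prod_Ico_succ_top (Nat.zero_le n)]
    have e2 : Delt 0 N 2 2 (n + 1) = Delt 0 N 2 2 n *
        ∏ i ∈ Finset.Ico 2 n, (tt' 0 N 2 * zn 0 N 2 i - (tt' 0 N 2)⁻¹ * zn 0 N 2 n) := by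
      unfold Delt
      rw [Finset.prod_Ico_succ_top hn]
    have e3 : (∏ k ∈ Finset.Ico 1 (n + 1),
          (tt' 0 N 2 * zn 0 N 2 0 - (tt' 0 N 2)⁻¹ * zn 0 N 2 k)) =
        (∏ k ∈ Finset.Ico 1 n, (tt' 0 N 2 * zn 0 N 2 0 - (tt' 0 N 2)⁻¹ * zn 0 N 2 k)) *
          (tt' 0 N 2 * zn 0 N 2 0 - (tt' 0 N 2)⁻¹ * zn 0 N 2 n) :=
      Finset.prod_Ico_succ_top (by omega) _
    have e4 : (∏ k ∈ Finset.Ico 2 (n + 1),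
          (tt' 0 N 2 * zn 0 N 2 1 - (tt' 0 N 2)⁻¹ * zn 0 N 2 k)) =
        (∏ k ∈ Finset.Ico 2 n, (tt' 0 N 2 * zn 0 N 2 1 - (tt' 0 N 2)⁻¹ * zn 0 N 2 k)) *
          (tt' 0 N 2 * zn 0 N 2 1 - (tt' 0 N 2)⁻¹ * zn 0 N 2 n) :=
      Finset.prod_Ico_succ_top hn _
    have e5 : (∏ i ∈ Finset.Ico 0 n, (tt' 0 N 2 * zn 0 N 2 i - (tt' 0 N 2)⁻¹ * zn 0 N 2 n)) =
        ((tt' 0 N 2 * zn 0 N 2 0 - (tt' 0 N 2)⁻¹ * zn 0 N 2 n) *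
          (tt' 0 N 2 * zn 0 N 2 1 - (tt' 0 N 2)⁻¹ * zn 0 N 2 n)) *
        ∏ i ∈ Finset.Ico 2 n, (tt' 0 N 2 * zn 0 N 2 i - (tt' 0 N 2)⁻¹ * zn 0 N 2 n) := by
      rw [← Finset.prod_Ico_consecutive _ (Nat.zero_le 2) hn]
      congr 1
      rw [Nat.Ico_zero_eq_range]
      simp [Finset.prod_range_succ]
    rw [e1, e2, e3, e4, ih, e5]
    ring

lemma prodZ_ne {j : ℕ} (hj : j < N) (c : ℕ) :
    (∏ k ∈ Finset.Ico c N, (tt' 0 N 2 * zn 0 N 2 j - (tt' 0 N 2)⁻¹ * zn 0 N 2 k)) ≠ 0 := by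
  rw [zn_eq N hj]
  exact prodW_ne N _ c

end TwoRowAux

open TwoRowAux in
theorem two_row_initial' (N : ℕ) (hN : 2 ≤ N) :
    Delt 0 N 2 0 N *
        iInt 0 N 2
          ((wv 0 N 2 1 - wv 0 N 2 0) *
            (tt' 0 N 2 * wv 0 N 2 0 - (tt' 0 N 2)⁻¹ * wv 0 N 2 1) *
            phiF 0 N 2 1 (wv 0 N 2 0) * phiF 0 N 2 2 (wv 0 N 2 1)) =
      Delt 0 N 2 0 2 * Delt 0 N 2 2 N := by
  have h0N : 0 < N := by omega
  have h1N : 1 < N := by omega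
  have hTne := T_ne N
  have hiInt : iInt 0 N 2 (Fdef N) = cint 0 N 2 1 (cint 0 N 2 0 (Fdef N)) := rfl
  rw [show (wv 0 N 2 1 - wv 0 N 2 0) *
      (tt' 0 N 2 * wv 0 N 2 0 - (tt' 0 N 2)⁻¹ * wv 0 N 2 1) *
      phiF 0 N 2 1 (wv 0 N 2 0) * phiF 0 N 2 2 (wv 0 N 2 1) = Fdef N from rfl,
    hiInt, L2 N hN, L3 N hN]
  have hnp : am N (np N) = tt' 0 N 2 ^ (N - 1) * tt' 0 N 2 ^ (N - 2) *
      (tt' 0 N 2 ^ 2 * zn 0 N 2 0 - zn 0 N 2 1) := by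
    simp only [np, map_mul, map_pow, map_sub, am_tP, am_zP]
  have hnq : am N (nq N) = tt' 0 N 2 *
      (tt' 0 N 2 ^ (N - 1) *
        ∏ k ∈ Finset.Ico 1 N, (tt' 0 N 2 * zn 0 N 2 0 - (tt' 0 N 2)⁻¹ * zn 0 N 2 k)) *
      (tt' 0 N 2 ^ (N - 2) *
        ∏ k ∈ Finset.Ico 2 N, (tt' 0 N 2 * zn 0 N 2 1 - (tt' 0 N 2)⁻¹ * zn 0 N 2 k)) := by
    simp only [nq, map_mul, am_tP, am_QZ N h0N 1, am_QZ N h1N 2]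
  rw [hnp, hnq, delt_split N N hN, delt_base N]
  have hA := prodZ_ne N h0N 1
  have hB := prodZ_ne N h1N 2
  set A := ∏ k ∈ Finset.Ico 1 N, (tt' 0 N 2 * zn 0 N 2 0 - (tt' 0 N 2)⁻¹ * zn 0 N 2 k)
  set B := ∏ k ∈ Finset.Ico 2 N, (tt' 0 N 2 * zn 0 N 2 1 - (tt' 0 N 2)⁻¹ * zn 0 N 2 k)
  have hQne : tt' 0 N 2 * (tt' 0 N 2 ^ (N - 1) * A) * (tt' 0 N 2 ^ (N - 2) * B) ≠ 0 :=
    mul_ne_zero (mul_ne_zero hTne (mul_ne_zero (pow_ne_zero _ hTne) hA))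
      (mul_ne_zero (pow_ne_zero _ hTne) hB)
  have hd2 : tt' 0 N 2 * zn 0 N 2 0 - (tt' 0 N 2)⁻¹ * zn 0 N 2 1
      = (tt' 0 N 2 ^ 2 * zn 0 N 2 0 - zn 0 N 2 1) / tt' 0 N 2 := by
    field_simp
  rw [hd2, ← mul_div_assoc, div_mul_eq_mul_div, div_eq_div_iff hQne hTne]
  ring

/-- initial condition for the two-row integral.  With `w_1 = wv 0 N 2 0`
and `w_2 = wv 0 N 2 1`, and the double contour integral `iInt` being the iterated sum of
residues at `w_1 = z_m`, then `w_2 = z_m`, `m = 1, …, N`: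
`Δ_t(z_1,…,z_N) ∮∮ (w_2-w_1)(t w_1 - t⁻¹ w_2) φ_1(w_1) φ_2(w_2) dw_1 dw_2/(2πi)²
  = Δ_t(z_1, z_2) Δ_t(z_3,…,z_N)`. -/
theorem two_row_initial (N : ℕ) (hN : 2 ≤ N) :
    Delt 0 N 2 0 N *
        iInt 0 N 2
          ((wv 0 N 2 1 - wv 0 N 2 0) *
            (tt' 0 N 2 * wv 0 N 2 0 - (tt' 0 N 2)⁻¹ * wv 0 N 2 1) *
            phiF 0 N 2 1 (wv 0 N 2 0) * phiF 0 N 2 2 (wv 0 N 2 1)) =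
      Delt 0 N 2 0 2 * Delt 0 N 2 2 N := by
  exact two_row_initial' N hN

end
end
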